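/- If p solves the replicator-mutator equation with mean fitness φ(t), and N solves the logistic equation N'(t) = (φ(t) − N(t))·N(t), then u(x,t) = N(t)·p(x,t) solves the population equation ∂u/∂t = (f(x) − N(t))·u + μ·∂²u/∂x² with N(t) = ∫ u(x,t) dx. -/

import Mathlib

open MeasureTheory

/-- If p solves the replicator-mutator equation and N solves the logistic equation
N' = (φ − N)N, then u = N·p solves the population equation. -/
theorem stmt_8 (μ : ℝ) (hμ : 0 < μ) (f : ℝ → ℝ)
    (p : ℝ → ℝ → ℝ) (φ N : ℝ → ℝ)
    (hprob : ∀ t, 0 ≤ t → ∫ x : ℝ, p x t = 1)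
    (hφ : ∀ t, φ t = ∫ x : ℝ, f x * p x t)
    (hpde : ∀ x t, 0 ≤ t → deriv (fun τ => p x τ) t
        = (f x - φ t) * p x t + μ * deriv (deriv (fun ξ => p ξ t)) x)
    (hpt : ∀ x t, DifferentiableAt ℝ (fun τ => p x τ) t)
    (hpx : ∀ x t, DifferentiableAt ℝ (fun ξ => p ξ t) x)
    (hpxx : ∀ x t, DifferentiableAt ℝ (deriv (fun ξ => p ξ t)) x)
    (hNpos : ∀ t, 0 ≤ t → 0 < N t)
    (hN : ∀ t, 0 ≤ t → HasDerivAt N ((φ t - N t) * N t) t)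
    (hintp : ∀ t, 0 ≤ t → Integrable (fun x => p x t))
    (u : ℝ → ℝ → ℝ)
    (hu : ∀ x t, u x t = N t * p x t) :
    ∀ t, 0 ≤ t →
      (∀ x, deriv (fun τ => u x τ) t
          = (f x - N t) * u x t + μ * deriv (deriv (fun ξ => u ξ t)) x) ∧
      N t = ∫ x : ℝ, u x t := by
  intro t ht
  constructor
  · intro x
    -- spatial derivatives
    have hux : (fun ξ => u ξ t) = fun ξ => N t * p ξ t := by
      funext ξ; exact hu ξ t
    have hdx : deriv (fun ξ => u ξ t) = fun ξ => N t * deriv (fun ξ' => p ξ' t) ξ := by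
      funext ξ
      rw [hux]
      exact deriv_const_mul (N t) (hpx ξ t)
    have hdxx : deriv (deriv (fun ξ => u ξ t)) x
        = N t * deriv (deriv (fun ξ => p ξ t)) x := by
      rw [hdx]
      exact deriv_const_mul (N t) (hpxx x t)
    -- time derivative
    have hut : (fun τ => u x τ) = fun τ => N τ * p x τ := by
      funext τ; exact hu x τ
    have hdt : deriv (fun τ => u x τ) t
        = (φ t - N t) * N t * p x t + N t * deriv (fun τ => p x τ) t := by
      rw [hut]
      have h := HasDerivAt.mul (hN t ht) ((hpt x t).hasDerivAt)
      exact h.deriv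
    rw [hdt, hpde x t ht, hdxx, hu x t]
    ring
  · have : ∫ x : ℝ, u x t = N t * ∫ x : ℝ, p x t := by
      rw [← integral_const_mul]
      congr 1; funext x; exact hu x t
    rw [this, hprob t ht, mul_one]
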